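/- For every d ∈ ℕ, Σ_{j ∈ ℤ^d ∖ {0}} ( ∏_{h=1}^d max{|j_h|, 1} )^{−2} = (π²/3) Σ_{h=1}^d (π²/3 + 1)^{h−1}. In particular the sum on the left converges. -/

import Mathlib

open MeasureTheory Filter Finset

noncomputable section

/-- Euclidean norm on `Fin d → ℝ`. -/
def euclNorm {d : ℕ} (x : Fin d → ℝ) : ℝ := Real.sqrt (∑ h, (x h) ^ 2)

/-- Tensor cosine basis function `e_k` associated to the box `[-L, L]`. -/
def cosBasis {d : ℕ} (L : Fin d → ℝ) (k : Fin d → ℕ) (x : Fin d → ℝ) : ℝ :=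
  ∏ h, Real.cos ((k h : ℝ) * Real.pi * (x h + L h) / (2 * L h))

/-- Weight `2^{-Λ(k)}` where `Λ(k)` is the number of zero components of `k`;
used in the primed sums `Σ'`. -/
def wt {d : ℕ} (k : Fin d → ℕ) : ℝ :=
  (1 / 2 : ℝ) ^ (Finset.univ.filter (fun h => k h = 0)).card

/-- Fourier transform `f̂(u) = ∫ f(x) e^{i u·x} dx`. -/
def fourierT {d : ℕ} (f : (Fin d → ℝ) → ℝ) (u : Fin d → ℝ) : ℂ :=
  ∫ x : Fin d → ℝ, (f x : ℂ) * Complex.exp (Complex.I * (∑ h, (u h : ℂ) * (x h : ℂ)))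

/-- The quantity `B_f(L)` from the definition of COS-admissibility. -/
def Bf {d : ℕ} (f : (Fin d → ℝ) → ℝ) (L : Fin d → ℝ) : ℝ :=
  ∑' k : Fin d → ℕ, wt k * (∏ h, L h)⁻¹ *
    (∫ x in (Set.Icc (-L) L)ᶜ, f x * cosBasis L k x) ^ 2

/-- COS-admissibility: `B_f(L) → 0` as `min_h L_h → ∞`, i.e. as all components
of `L` tend to infinity. -/
def COSAdmissible {d : ℕ} (f : (Fin d → ℝ) → ℝ) : Prop :=
  Filter.Tendsto (fun L : Fin d → ℝ => Bf f L) Filter.atTop (nhds 0)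

/-- Sign vectors `s ∈ {1} × {-1,1}^{d-1}`, encoded as boolean vectors whose first
component is `true`. -/
def signSet (d : ℕ) : Finset (Fin d → Bool) :=
  Finset.univ.filter fun σ => ∀ h : Fin d, (h : ℕ) = 0 → σ h = true

/-- The sign `±1` associated to a boolean. -/
def sgn {d : ℕ} (σ : Fin d → Bool) (h : Fin d) : ℝ := if σ h then 1 else -1

/-- COS coefficients computed from a (possibly approximate) Fourier transform `ϑ`:
`c_k = (2^{d-1} ∏_h L_h)⁻¹ Σ_s Re{ ϑ(π s k/(2L)) exp(i (π/2) s·k) }`. -/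
def cosCoef {d : ℕ} (ϑ : (Fin d → ℝ) → ℂ) (L : Fin d → ℝ) (k : Fin d → ℕ) : ℝ :=
  ((2 : ℝ) ^ (d - 1) * ∏ h, L h)⁻¹ *
    ∑ σ ∈ signSet d,
      (ϑ (fun h => Real.pi * (sgn σ h * (k h : ℝ)) / (2 * L h)) *
        Complex.exp (Complex.I * ((Real.pi : ℂ) / 2) *
          ((∑ h, sgn σ h * (k h : ℝ) : ℝ) : ℂ))).re

/-- Classical Fourier-cosine coefficients `a_k` of `f·1_{[-L,L]}`. -/
def aCoef {d : ℕ} (f : (Fin d → ℝ) → ℝ) (L : Fin d → ℝ) (k : Fin d → ℕ) : ℝ :=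
  (∏ h, L h)⁻¹ * ∫ x in Set.Icc (-L) L, f x * cosBasis L k x

/-- The constant `Ξ = (π²/3) Σ_{h=1}^d (π²/3 + 1)^{h-1}`. -/
def Xi (d : ℕ) : ℝ :=
  Real.pi ^ 2 / 3 * ∑ h ∈ Finset.range d, (Real.pi ^ 2 / 3 + 1) ^ h

/-- A function decays exponentially if `|f(x)| ≤ C₁ e^{-C₂ |x|}` for `|x| > m`. -/
def DecaysExp {d : ℕ} (f : (Fin d → ℝ) → ℝ) : Prop :=
  ∃ C₁ C₂ m : ℝ, 0 < C₁ ∧ 0 < C₂ ∧ 0 < m ∧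
    ∀ x, m < euclNorm x → |f x| ≤ C₁ * Real.exp (-C₂ * euclNorm x)

/-- one-dimensional term -/
def gg (j : ℤ) : ℝ := ((max |(j : ℝ)| 1) ^ 2)⁻¹

lemma gg_zero : gg 0 = 1 := by simp [gg]

lemma gg_nonneg (j : ℤ) : 0 ≤ gg j := by
  unfold gg; positivity

lemma hasSum_gg : HasSum gg (Real.pi ^ 2 / 3 + 1) := by
  have hz := hasSum_zeta_two
  -- nonneg part: f n = 1/n^2 + ite (n=0) 1 0
  have hpos : HasSum (fun n : ℕ => (1 : ℝ) / (n : ℝ) ^ 2 + if n = 0 then 1 else 0)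
      (Real.pi ^ 2 / 6 + 1) := hz.add (hasSum_ite_eq 0 1)
  have hneg : HasSum (fun n : ℕ => (1 : ℝ) / ((n : ℝ) + 1) ^ 2) (Real.pi ^ 2 / 6) := by
    have := (hasSum_nat_add_iff' (f := fun n : ℕ => (1 : ℝ) / (n : ℝ) ^ 2) 1).mpr hz
    simpa using this
  have key : HasSum (Int.rec (fun n : ℕ => (1 : ℝ) / (n : ℝ) ^ 2 + if n = 0 then 1 else 0)
      (fun n : ℕ => (1 : ℝ) / ((n : ℝ) + 1) ^ 2)) ((Real.pi ^ 2 / 6 + 1) + Real.pi ^ 2 / 6) :=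
    hpos.int_rec hneg
  have heq : (Int.rec (fun n : ℕ => (1 : ℝ) / (n : ℝ) ^ 2 + if n = 0 then 1 else 0)
      (fun n : ℕ => (1 : ℝ) / ((n : ℝ) + 1) ^ 2) : ℤ → ℝ) = gg := by
    funext j
    cases j with
    | ofNat n =>
      rcases Nat.eq_zero_or_pos n with rfl | hn
      · simp [gg]
      · have h1 : (1 : ℝ) ≤ (n : ℝ) := by exact_mod_cast hn
        simp only [gg, Int.ofNat_eq_coe, Int.cast_natCast]
        rw [abs_of_nonneg (by positivity), max_eq_left h1, if_neg hn.ne']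
        rw [add_zero, one_div]
    | negSucc n =>
      have h1 : (1 : ℝ) ≤ (n : ℝ) + 1 := le_add_of_nonneg_left (Nat.cast_nonneg n)
      simp only [gg, Int.cast_negSucc]
      rw [abs_neg, abs_of_nonneg (by positivity)]
      push_cast
      rw [max_eq_left h1, one_div]
  rw [heq] at key
  convert key using 1
  ring

/-- full sum over ℤ^d -/
lemma hasSum_full (d : ℕ) :
    HasSum (fun j : Fin d → ℤ => ∏ h, gg (j h)) ((Real.pi ^ 2 / 3 + 1) ^ d) := by
  induction d with
  | zero =>
    simpa using hasSum_single (f := fun j : Fin 0 → ℤ => ∏ h, gg (j h)) (fun _ => 0)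
      (by intro b hb; exact absurd (funext fun h => h.elim0) hb)
  | succ d ih =>
    have hsummable : Summable (fun p : ℤ × (Fin d → ℤ) => gg p.1 * ∏ h, gg (p.2 h)) :=
      Summable.mul_of_nonneg (f := gg) (g := fun j : Fin d → ℤ => ∏ h, gg (j h))
        hasSum_gg.summable ih.summable
        (fun j => gg_nonneg j) (fun j => Finset.prod_nonneg (fun h _ => gg_nonneg _))
    have hprod : HasSum (fun p : ℤ × (Fin d → ℤ) => gg p.1 * ∏ h, gg (p.2 h))
        ((Real.pi ^ 2 / 3 + 1) * (Real.pi ^ 2 / 3 + 1) ^ d) :=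
      HasSum.mul (f := gg) (g := fun j : Fin d → ℤ => ∏ h, gg (j h)) hasSum_gg ih hsummable
    have := ((Fin.consEquiv (fun _ : Fin (d + 1) => ℤ)).symm.hasSum_iff
      (f := fun p : ℤ × (Fin d → ℤ) => gg p.1 * ∏ h, gg (p.2 h))).mpr hprod
    rw [pow_succ']
    convert this using 2 with j
    rw [Fin.prod_univ_succ]
    simp [Fin.consEquiv]
    exact Or.inl rfl

/-- The constant `Ξ`: the sum over nonzero integer vectors `j` of
`(∏_h max{|j_h|,1})^{-2}` converges and equals `(π²/3) Σ_{h=1}^d (π²/3+1)^{h-1}`. -/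
theorem xi_sum_eval (d : ℕ) :
    Summable (fun j : {j : Fin d → ℤ // j ≠ 0} =>
      ((∏ h, max |(j.1 h : ℝ)| 1) ^ 2)⁻¹) ∧
    (∑' j : {j : Fin d → ℤ // j ≠ 0}, ((∏ h, max |(j.1 h : ℝ)| 1) ^ 2)⁻¹) =
      Real.pi ^ 2 / 3 * ∑ h ∈ Finset.range d, (Real.pi ^ 2 / 3 + 1) ^ h := by
  set A : ℝ := Real.pi ^ 2 / 3 + 1 with hA
  have hfull := hasSum_full d
  -- indicator form
  have hind : HasSum (Set.indicator {j : Fin d → ℤ | j ≠ 0} (fun j => ∏ h, gg (j h)))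
      (A ^ d - 1) := by
    have hsingle : HasSum (fun j : Fin d → ℤ => if j = 0 then (1 : ℝ) else 0) 1 := by
      simpa using hasSum_ite_eq (0 : Fin d → ℤ) (1 : ℝ)
    have := hfull.sub hsingle
    convert this using 1
    · rfl
    funext j
    by_cases hj : j = 0
    · subst hj
      simp [Set.indicator, gg_zero]
    · simp [Set.indicator, hj, Set.mem_setOf_eq]
  have hsub : HasSum (fun j : {j : Fin d → ℤ // j ≠ 0} => ∏ h, gg (j.1 h)) (A ^ d - 1) := by
    rw [show (fun j : {j : Fin d → ℤ // j ≠ 0} => ∏ h, gg (j.1 h)) =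
        ((fun j : Fin d → ℤ => ∏ h, gg (j h)) ∘ (↑) :
          {j : Fin d → ℤ | j ≠ 0} → ℝ) from rfl]
    exact hasSum_subtype_iff_indicator.mpr hind
  have hfun : (fun j : {j : Fin d → ℤ // j ≠ 0} =>
      ((∏ h, max |(j.1 h : ℝ)| 1) ^ 2)⁻¹) =
      (fun j : {j : Fin d → ℤ // j ≠ 0} => ∏ h, gg (j.1 h)) := by
    funext j
    rw [← Finset.prod_pow, ← Finset.prod_inv_distrib]
    rfl
  rw [hfun]
  refine ⟨hsub.summable, ?_⟩
  rw [hsub.tsum_eq]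
  have : A ^ d - 1 = (A - 1) * ∑ h ∈ Finset.range d, A ^ h := (mul_geom_sum A d).symm
  rw [this, hA]
  ring_nf
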